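/- Let R be an associative ring with unit and (𝒯, 𝒮) a hereditary Tor-pair. If T ∈ 𝒯 and K is an 𝒮-pure submodule of T, then K ∈ 𝒯. -/

import Mathlib

open TensorProduct MulOpposite CategoryTheory

universe u

section Preliminaries

/-- A class of modules over the ring `A` (for `A = Rᵐᵒᵖ` these are right `R`-modules,
for `A = R` left `R`-modules). -/
abbrev ModClass (A : Type u) [Ring A] : Type (u + 1) :=
  ∀ (M : Type u) [AddCommGroup M] [Module A M], Prop

variable (R : Type u) [Ring R]

/-- The subgroup of relations defining the balanced tensor product `M ⊗_R N` of a
right `R`-module `M` and a left `R`-module `N`. -/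
def torRel (M : Type u) [AddCommGroup M] [Module Rᵐᵒᵖ M]
    (N : Type u) [AddCommGroup N] [Module R N] : Submodule ℤ (TensorProduct ℤ M N) :=
  Submodule.span ℤ
    {x | ∃ (r : R) (m : M) (n : N), x = (op r • m) ⊗ₜ[ℤ] n - m ⊗ₜ[ℤ] (r • n)}

/-- The balanced tensor product `M ⊗_R N` of a right `R`-module `M` and a left
`R`-module `N`, as an abelian group (`ℤ`-module). -/
abbrev BTen (M : Type u) [AddCommGroup M] [Module Rᵐᵒᵖ M]
    (N : Type u) [AddCommGroup N] [Module R N] : Type u :=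
  TensorProduct ℤ M N ⧸ torRel R M N

/-- Functoriality of the balanced tensor product in the first (right-module) variable:
the map `f ⊗ id_N`. -/
noncomputable def btMapL {M M' : Type u} [AddCommGroup M] [Module Rᵐᵒᵖ M]
    [AddCommGroup M'] [Module Rᵐᵒᵖ M'] (N : Type u) [AddCommGroup N] [Module R N]
    (f : M →ₗ[Rᵐᵒᵖ] M') : BTen R M N →ₗ[ℤ] BTen R M' N :=
  Submodule.mapQ _ _ (TensorProduct.map f.toAddMonoidHom.toIntLinearMap LinearMap.id)
    (by
      rw [torRel, Submodule.span_le]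
      rintro _ ⟨r, m, n, rfl⟩
      refine Submodule.subset_span ⟨r, f m, n, ?_⟩
      erw [map_sub, TensorProduct.map_tmul, TensorProduct.map_tmul]
      simp [map_smul])

/-- Functoriality of the balanced tensor product in the second (left-module) variable:
the map `id_M ⊗ g`. -/
noncomputable def btMapR (M : Type u) [AddCommGroup M] [Module Rᵐᵒᵖ M]
    {N N' : Type u} [AddCommGroup N] [Module R N] [AddCommGroup N'] [Module R N']
    (g : N →ₗ[R] N') : BTen R M N →ₗ[ℤ] BTen R M N' :=
  Submodule.mapQ _ _ (TensorProduct.map LinearMap.id g.toAddMonoidHom.toIntLinearMap)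
    (by
      rw [torRel, Submodule.span_le]
      rintro _ ⟨r, m, n, rfl⟩
      refine Submodule.subset_span ⟨r, m, g n, ?_⟩
      erw [map_sub, TensorProduct.map_tmul, TensorProduct.map_tmul]
      simp [map_smul])

/-- The functor `- ⊗_R N : Mod-R ⥤ Ab` (realized with values in `ℤ`-modules)
given by the balanced tensor product with a fixed left `R`-module `N`. -/
noncomputable def tenFunctor (N : Type u) [AddCommGroup N] [Module R N] :
    ModuleCat.{u} Rᵐᵒᵖ ⥤ ModuleCat.{u} ℤ where
  obj M := ModuleCat.of ℤ (BTen R M N)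
  map {M M'} f := ModuleCat.ofHom (btMapL R N f.hom)
  map_id M := by
    apply ModuleCat.hom_ext
    apply Submodule.linearMap_qext
    apply TensorProduct.ext'
    intro m n
    rfl
  map_comp {M M' M''} f g := by
    apply ModuleCat.hom_ext
    apply Submodule.linearMap_qext
    apply TensorProduct.ext'
    intro m n
    rfl

lemma btMapL_add {M M' : Type u} [AddCommGroup M] [Module Rᵐᵒᵖ M]
    [AddCommGroup M'] [Module Rᵐᵒᵖ M'] (N : Type u) [AddCommGroup N] [Module R N]
    (f g : M →ₗ[Rᵐᵒᵖ] M') : btMapL R N (f + g) = btMapL R N f + btMapL R N g := by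
  apply Submodule.linearMap_qext
  apply TensorProduct.ext'
  intro m n
  change (Submodule.Quotient.mk ((f + g) m ⊗ₜ[ℤ] n) : BTen R M' N) =
    Submodule.Quotient.mk (f m ⊗ₜ[ℤ] n) + Submodule.Quotient.mk (g m ⊗ₜ[ℤ] n)
  erw [LinearMap.add_apply, TensorProduct.add_tmul, Submodule.Quotient.mk_add]

noncomputable instance tenFunctorAdditive (N : Type u) [AddCommGroup N] [Module R N] :
    (tenFunctor R N).Additive where
  map_add {_ _} {f g} := by
    apply ModuleCat.hom_ext
    simp only [tenFunctor, ModuleCat.hom_add, ModuleCat.hom_ofHom]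
    exact btMapL_add R N f.hom g.hom

/-- `Tor_n^R(M, N) = 0`, where `Tor_n^R(-, N)` is the `n`-th left derived functor of the
balanced tensor product functor `- ⊗_R N`. -/
def TorVanish (n : ℕ) (M : Type u) [AddCommGroup M] [Module Rᵐᵒᵖ M]
    (N : Type u) [AddCommGroup N] [Module R N] : Prop :=
  Limits.IsZero (((tenFunctor R N).leftDerived n).obj (ModuleCat.of Rᵐᵒᵖ M))

/-- `(𝒯, 𝒮)` is a Tor-pair: `𝒯 = ⊤𝒮` and `𝒮 = 𝒯⊤`, where orthogonality is with respect
to the vanishing of `Tor₁`. -/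
def IsTorPair (𝒯 : ModClass Rᵐᵒᵖ) (𝒮 : ModClass R) : Prop :=
  (∀ (M : Type u) [AddCommGroup M] [Module Rᵐᵒᵖ M],
      𝒯 M ↔ ∀ (S : Type u) [AddCommGroup S] [Module R S], 𝒮 S → TorVanish R 1 M S) ∧
  (∀ (S : Type u) [AddCommGroup S] [Module R S],
      𝒮 S ↔ ∀ (M : Type u) [AddCommGroup M] [Module Rᵐᵒᵖ M], 𝒯 M → TorVanish R 1 M S)

variable {R}

/-- A class of modules is resolving if it contains all projective modules and is closed
under extensions and under kernels of epimorphisms between its members. -/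
def Resolving {A : Type u} [Ring A] (𝒞 : ModClass A) : Prop :=
  (∀ (P : Type u) [AddCommGroup P] [Module A P], Module.Projective A P → 𝒞 P) ∧
  (∀ (M₁ M₂ M₃ : Type u) [AddCommGroup M₁] [Module A M₁] [AddCommGroup M₂] [Module A M₂]
      [AddCommGroup M₃] [Module A M₃] (f : M₁ →ₗ[A] M₂) (g : M₂ →ₗ[A] M₃),
      Function.Injective f → Function.Exact f g → Function.Surjective g →
      𝒞 M₁ → 𝒞 M₃ → 𝒞 M₂) ∧
  (∀ (M₂ M₃ : Type u) [AddCommGroup M₂] [Module A M₂] [AddCommGroup M₃] [Module A M₃]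
      (g : M₂ →ₗ[A] M₃), Function.Surjective g → 𝒞 M₂ → 𝒞 M₃ → 𝒞 (LinearMap.ker g))

/-- `DimLE 𝒞 n M` means that the `𝒞`-projective dimension of `M` is at most `n`: some
projective resolution of `M` has its `(n-1)`-st syzygy in `𝒞` (for `n = 0`, `M ∈ 𝒞`). -/
def DimLE {A : Type u} [Ring A] (𝒞 : ModClass A) : ℕ → ModClass A
  | 0 => 𝒞
  | (n + 1) => fun M _ _ =>
      ∃ (P : Type u) (_ : AddCommGroup P) (_ : Module A P) (f : P →ₗ[A] M),
        Module.Projective A P ∧ Function.Surjective f ∧ DimLE 𝒞 n (LinearMap.ker f)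

/-- The `𝒞`-projective dimension of `M`, as an element of `ℕ∞` (`⊤` playing the role
of `ω`). -/
noncomputable def Dim {A : Type u} [Ring A] (𝒞 : ModClass A) (M : Type u) [AddCommGroup M]
    [Module A M] : ℕ∞ :=
  sInf {d : ℕ∞ | ∃ n : ℕ, d = n ∧ DimLE 𝒞 n M}

/-- The `𝒞`-projective dimension of a class `𝒴` of modules:
`pd_𝒞(𝒴) = sup { pd_𝒞(Y) : Y ∈ 𝒴 }`. -/
noncomputable def DimClass {A : Type u} [Ring A] (𝒞 𝒴 : ModClass A) : ℕ∞ :=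
  sSup {d : ℕ∞ | ∃ (M : Type u) (_ : AddCommGroup M) (_ : Module A M), 𝒴 M ∧ d = Dim 𝒞 M}

/-- The class `Prod(𝒳)` of all modules isomorphic to a direct product of modules in `𝒳`. -/
def ProdClass {A : Type u} [Ring A] (𝒳 : ModClass A) : ModClass A :=
  fun M _ _ => ∃ (I : Type u) (X : I → Type u) (_ : ∀ i, AddCommGroup (X i))
    (_ : ∀ i, Module A (X i)), (∀ i, 𝒳 (X i)) ∧ Nonempty (M ≃ₗ[A] ∀ i, X i)

/-- The class `𝒳` is closed under direct products. -/
def ProdClosed {A : Type u} [Ring A] (𝒳 : ModClass A) : Prop :=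
  ∀ (I : Type u) (X : I → Type u) (_ : ∀ i, AddCommGroup (X i)) (_ : ∀ i, Module A (X i)),
    (∀ i, 𝒳 (X i)) → 𝒳 (∀ i, X i)

/-- The class `𝒳` is closed under direct limits (of directed systems). -/
def DirectLimitClosed {A : Type u} [Ring A] (𝒳 : ModClass A) : Prop :=
  ∀ (ι : Type u) (_ : Preorder ι) (_ : DecidableEq ι) (_ : Nonempty ι)
    (_ : IsDirected ι (· ≤ ·)) (G : ι → Type u) (_ : ∀ i, AddCommGroup (G i))
    (_ : ∀ i, Module A (G i)) (f : ∀ i j, i ≤ j → G i →ₗ[A] G j)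
    (_ : DirectedSystem G fun i j h => f i j h),
    (∀ i, 𝒳 (G i)) → 𝒳 (Module.DirectLimit G f)

variable (R)

/-- A short exact sequence `0 → A → B → C → 0` of right `R`-modules is `𝒮`-pure if for
every `S ∈ 𝒮` the sequence `0 → A ⊗ S → B ⊗ S → C ⊗ S → 0` is exact. -/
def SPureSeq (𝒮 : ModClass R) {M₁ M₂ M₃ : Type u} [AddCommGroup M₁] [Module Rᵐᵒᵖ M₁]
    [AddCommGroup M₂] [Module Rᵐᵒᵖ M₂] [AddCommGroup M₃] [Module Rᵐᵒᵖ M₃]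
    (f : M₁ →ₗ[Rᵐᵒᵖ] M₂) (g : M₂ →ₗ[Rᵐᵒᵖ] M₃) : Prop :=
  ∀ (S : Type u) [AddCommGroup S] [Module R S], 𝒮 S →
    Function.Injective (btMapL R S f) ∧ Function.Exact (btMapL R S f) (btMapL R S g) ∧
      Function.Surjective (btMapL R S g)

/-- A submodule `K ≤ T` is `𝒮`-pure if the sequence `0 → K → T → T/K → 0` is `𝒮`-pure. -/
def SPureSubmodule (𝒮 : ModClass R) (T : Type u) [AddCommGroup T] [Module Rᵐᵒᵖ T]
    (K : Submodule Rᵐᵒᵖ T) : Prop :=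
  SPureSeq R 𝒮 K.subtype K.mkQ

/-- A submodule `K ≤ T` of a right `R`-module is pure if for every left `R`-module `X`
the induced map `K ⊗ X → T ⊗ X` is injective. -/
def PureSubmodule (T : Type u) [AddCommGroup T] [Module Rᵐᵒᵖ T]
    (K : Submodule Rᵐᵒᵖ T) : Prop :=
  ∀ (X : Type u) [AddCommGroup X] [Module R X], Function.Injective (btMapL R X K.subtype)

/-- A left `R`-module `N` is `𝒯`-Mittag-Leffler, for a class `𝒯` of right `R`-modules, if
for every family `{X i}` in `𝒯` the canonical map `(∏ X i) ⊗ N → ∏ (X i ⊗ N)` is injective. -/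
def IsMLLeft (𝒯 : ModClass Rᵐᵒᵖ) (N : Type u) [AddCommGroup N] [Module R N] : Prop :=
  ∀ (I : Type u) (X : I → Type u) (_ : ∀ i, AddCommGroup (X i)) (_ : ∀ i, Module Rᵐᵒᵖ (X i)),
    (∀ i, 𝒯 (X i)) →
    Function.Injective
      (fun (t : BTen R (∀ i, X i) N) (i : I) => btMapL R N (LinearMap.proj i) t)

/-- The class `ML(𝒯)` of `𝒯`-Mittag-Leffler left `R`-modules. -/
def MLClass (𝒯 : ModClass Rᵐᵒᵖ) : ModClass R := fun N _ _ => IsMLLeft R 𝒯 N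

/-- A right `R`-module `M` is `𝒴`-Mittag-Leffler, for a class `𝒴` of left `R`-modules, if
for every family `{Y i}` in `𝒴` the canonical map `M ⊗ (∏ Y i) → ∏ (M ⊗ Y i)` is injective. -/
def IsMLRight (𝒴 : ModClass R) (M : Type u) [AddCommGroup M] [Module Rᵐᵒᵖ M] : Prop :=
  ∀ (I : Type u) (Y : I → Type u) (_ : ∀ i, AddCommGroup (Y i)) (_ : ∀ i, Module R (Y i)),
    (∀ i, 𝒴 (Y i)) →
    Function.Injective
      (fun (t : BTen R M (∀ i, Y i)) (i : I) => btMapR R M (LinearMap.proj i) t)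

/-- A right `R`-module `M` is Mittag-Leffler if it is Mittag-Leffler with respect to the
class of all left `R`-modules. -/
def IsMLRightAll (M : Type u) [AddCommGroup M] [Module Rᵐᵒᵖ M] : Prop :=
  IsMLRight R (fun _ _ _ => True) M

/-- A right `R`-module `M` is flat if tensoring with `M` preserves injectivity of maps of
left `R`-modules. -/
def FlatRight (M : Type u) [AddCommGroup M] [Module Rᵐᵒᵖ M] : Prop :=
  ∀ (N N' : Type u) [AddCommGroup N] [Module R N] [AddCommGroup N'] [Module R N']
    (g : N →ₗ[R] N'), Function.Injective g → Function.Injective (btMapR R M g)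

/-- A left `R`-module `N` is flat if tensoring with `N` preserves injectivity of maps of
right `R`-modules. -/
def FlatLeft (N : Type u) [AddCommGroup N] [Module R N] : Prop :=
  ∀ (M M' : Type u) [AddCommGroup M] [Module Rᵐᵒᵖ M] [AddCommGroup M'] [Module Rᵐᵒᵖ M']
    (f : M →ₗ[Rᵐᵒᵖ] M'), Function.Injective f → Function.Injective (btMapL R N f)

variable {R}

/-- `f : X → M` is an `𝒳`-precover of `M`. -/
def IsPrecover {A : Type u} [Ring A] (𝒳 : ModClass A) {X M : Type u} [AddCommGroup X]
    [Module A X] [AddCommGroup M] [Module A M] (f : X →ₗ[A] M) : Prop :=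
  𝒳 X ∧ ∀ (X' : Type u) [AddCommGroup X'] [Module A X'], 𝒳 X' →
    ∀ g : X' →ₗ[A] M, ∃ h : X' →ₗ[A] X, f ∘ₗ h = g

/-- The class `𝒳` is precovering: every module has an `𝒳`-precover. -/
def Precovering {A : Type u} [Ring A] (𝒳 : ModClass A) : Prop :=
  ∀ (M : Type u) [AddCommGroup M] [Module A M],
    ∃ (X : Type u) (_ : AddCommGroup X) (_ : Module A X) (f : X →ₗ[A] M), IsPrecover 𝒳 f

/-- `g : M → X` is an `𝒳`-preenvelope of `M`. -/
def IsPreenvelope {A : Type u} [Ring A] (𝒳 : ModClass A) {M X : Type u} [AddCommGroup M]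
    [Module A M] [AddCommGroup X] [Module A X] (g : M →ₗ[A] X) : Prop :=
  𝒳 X ∧ ∀ (X' : Type u) [AddCommGroup X'] [Module A X'], 𝒳 X' →
    ∀ h : M →ₗ[A] X', ∃ k : X →ₗ[A] X', k ∘ₗ g = h

/-- The class `𝒳` is preenveloping: every module has an `𝒳`-preenvelope. -/
def Preenveloping {A : Type u} [Ring A] (𝒳 : ModClass A) : Prop :=
  ∀ (M : Type u) [AddCommGroup M] [Module A M],
    ∃ (X : Type u) (_ : AddCommGroup X) (_ : Module A X) (g : M →ₗ[A] X), IsPreenvelope 𝒳 g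

/-- The class `Gen(𝒳)` of modules generated by `𝒳`, i.e. epimorphic images of direct sums
of modules in `𝒳`. -/
def GenClass {A : Type u} [Ring A] (𝒳 : ModClass A) : ModClass A :=
  fun M _ _ => ∃ (I : Type u) (X : I → Type u) (_ : ∀ i, AddCommGroup (X i))
    (_ : ∀ i, Module A (X i)) (φ : DirectSum I X →ₗ[A] M),
      (∀ i, 𝒳 (X i)) ∧ Function.Surjective φ

/-- The trace `t_𝒳(M)` of a class `𝒳` in a module `M`: the sum of the images of all
homomorphisms from members of `𝒳` to `M`. -/
def traceSub {A : Type u} [Ring A] (𝒳 : ModClass A) (M : Type u) [AddCommGroup M]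
    [Module A M] : Submodule A M :=
  sSup {p : Submodule A M | ∃ (X : Type u) (_ : AddCommGroup X) (_ : Module A X)
    (f : X →ₗ[A] M), 𝒳 X ∧ p = LinearMap.range f}

/-- `F` is a continuous (well-ordered, smooth) chain of submodules of `M` of length `len`,
starting at `0` and exhausting `M`. -/
def IsOrdFiltration {A : Type u} [Ring A] {M : Type u} [AddCommGroup M] [Module A M]
    (len : Ordinal.{u}) (F : Ordinal.{u} → Submodule A M) : Prop :=
  F 0 = ⊥ ∧ F len = ⊤ ∧ Monotone F ∧
    ∀ β : Ordinal.{u}, β ≤ len → Order.IsSuccLimit β → F β = ⨆ (α : Ordinal.{u}) (_ : α < β), F α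

/-- The class `Filt-𝒢` of `𝒢`-filtered modules, for a family (set) `𝒢 = (G i)` of modules:
modules admitting a continuous chain of submodules starting at `0`, exhausting the module,
whose consecutive quotients are isomorphic to members of `𝒢`. -/
def FiltClass (A : Type u) [Ring A] {ι : Type u} (G : ι → Type u) [∀ i, AddCommGroup (G i)]
    [∀ i, Module A (G i)] : ModClass A :=
  fun M _ _ => ∃ (len : Ordinal.{u}) (F : Ordinal.{u} → Submodule A M),
    IsOrdFiltration len F ∧ ∀ α : Ordinal.{u}, α < len → ∃ i : ι,
      Nonempty ((↥(F (α + 1)) ⧸ (F α).comap (F (α + 1)).subtype) ≃ₗ[A] G i)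

/-- A class of modules is deconstructible if it is the class of `𝒢`-filtered modules for
some set `𝒢` of modules. -/
def Deconstructible {A : Type u} [Ring A] (𝒳 : ModClass A) : Prop :=
  ∃ (ι : Type u) (G : ι → Type u) (_ : ∀ i, AddCommGroup (G i)) (_ : ∀ i, Module A (G i)),
    ∀ (M : Type u) [AddCommGroup M] [Module A M], 𝒳 M ↔ FiltClass A G M

/-- `Ext¹_A(X, C) = 0`, where `Ext` is computed in the category of `A`-modules. -/
def Ext1Vanish {A : Type u} [Ring A] (X C : Type u) [AddCommGroup X] [Module A X]
    [AddCommGroup C] [Module A C] : Prop :=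
  Limits.IsZero ((((Ext ℤ (ModuleCat.{u} A) 1).obj (Opposite.op (ModuleCat.of A X))).obj
    (ModuleCat.of A C)))

/-- The property `ℙ_λ`: there is an infinite cardinal `κ_λ` such that any submodule of
cardinality at most `λ` of a member of `𝒳` can be enlarged to a submodule in `𝒳` of
cardinality at most `κ_λ`. -/
def PropertyP {A : Type u} [Ring A] (𝒳 : ModClass A) (lam : Cardinal.{u}) : Prop :=
  ∃ κ : Cardinal.{u}, Cardinal.aleph0 ≤ κ ∧
    ∀ (X : Type u) [AddCommGroup X] [Module A X], 𝒳 X →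
      ∀ S : Submodule A X, Cardinal.mk S ≤ lam →
        ∃ Y : Submodule A X, S ≤ Y ∧ 𝒳 Y ∧ Cardinal.mk Y ≤ κ

end Preliminaries

section Stmt2Aux

open CategoryTheory CategoryTheory.Limits

namespace Stmt2Aux

/-! ### Elementary lemmas on the balanced tensor product -/

variable (R : Type u) [Ring R]

section BT

variable {M₁ M₂ M₃ : Type u} [AddCommGroup M₁] [Module Rᵐᵒᵖ M₁]
  [AddCommGroup M₂] [Module Rᵐᵒᵖ M₂] [AddCommGroup M₃] [Module Rᵐᵒᵖ M₃]
  (N : Type u) [AddCommGroup N] [Module R N]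

lemma btMapL_mk (f : M₁ →ₗ[Rᵐᵒᵖ] M₂) (x : TensorProduct ℤ M₁ N) :
    btMapL R N f (Submodule.Quotient.mk x) =
      Submodule.Quotient.mk
        (TensorProduct.map f.toAddMonoidHom.toIntLinearMap LinearMap.id x) :=
  rfl

lemma btMapL_comp (f : M₁ →ₗ[Rᵐᵒᵖ] M₂) (g : M₂ →ₗ[Rᵐᵒᵖ] M₃) :
    btMapL R N (g.comp f) = (btMapL R N g).comp (btMapL R N f) := by
  apply Submodule.linearMap_qext
  apply TensorProduct.ext'
  intro m n
  rfl

lemma btMapL_zero : btMapL R N (0 : M₁ →ₗ[Rᵐᵒᵖ] M₂) = 0 := by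
  apply Submodule.linearMap_qext
  apply TensorProduct.ext'
  intro m n
  change (Submodule.Quotient.mk ((0 : M₁ →ₗ[Rᵐᵒᵖ] M₂) m ⊗ₜ[ℤ] n) : BTen R M₂ N) = 0
  rw [LinearMap.zero_apply, TensorProduct.zero_tmul, Submodule.Quotient.mk_zero]

lemma btMapL_surjective (g : M₂ →ₗ[Rᵐᵒᵖ] M₃) (hg : Function.Surjective g) :
    Function.Surjective (btMapL R N g) := by
  intro z
  obtain ⟨x, rfl⟩ := Submodule.Quotient.mk_surjective _ z
  obtain ⟨y, hy⟩ := LinearMap.rTensor_surjective N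
    (g := g.toAddMonoidHom.toIntLinearMap) hg x
  exact ⟨Submodule.Quotient.mk y, by rw [btMapL_mk]; exact congrArg _ hy⟩

lemma btMapL_exact (f : M₁ →ₗ[Rᵐᵒᵖ] M₂) (g : M₂ →ₗ[Rᵐᵒᵖ] M₃)
    (hfg : Function.Exact f g) (hg : Function.Surjective g) :
    Function.Exact (btMapL R N f) (btMapL R N g) := by
  rw [LinearMap.exact_iff]
  apply le_antisymm
  · -- ker ≤ range
    intro z hz
    obtain ⟨x, rfl⟩ := Submodule.Quotient.mk_surjective _ z
    rw [LinearMap.mem_ker, btMapL_mk, Submodule.Quotient.mk_eq_zero] at hz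
    -- hz : image of x lies in torRel R M₃ N
    have hsub : torRel R M₃ N ≤ Submodule.map
        (TensorProduct.map g.toAddMonoidHom.toIntLinearMap
          (LinearMap.id : N →ₗ[ℤ] N)) (torRel R M₂ N) := by
      refine Submodule.span_le.mpr ?_
      rintro _ ⟨r, m₃, n, rfl⟩
      obtain ⟨m₂, rfl⟩ := hg m₃
      refine ⟨(op r • m₂) ⊗ₜ[ℤ] n - m₂ ⊗ₜ[ℤ] (r • n),
        Submodule.subset_span ⟨r, m₂, n, rfl⟩, ?_⟩
      simp [map_smul]
    obtain ⟨y, hy_mem, hy_eq⟩ := hsub hz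
    have hxy : x - y ∈ Set.range
        ⇑(LinearMap.rTensor N f.toAddMonoidHom.toIntLinearMap) := by
      have hZ : Function.Exact
          (LinearMap.rTensor N f.toAddMonoidHom.toIntLinearMap)
          (LinearMap.rTensor N g.toAddMonoidHom.toIntLinearMap) :=
        _root_.rTensor_exact N hfg hg
      rw [← hZ (x - y)]
      have : (LinearMap.rTensor N g.toAddMonoidHom.toIntLinearMap) y
          = (LinearMap.rTensor N g.toAddMonoidHom.toIntLinearMap) x := hy_eq
      rw [map_sub, this, sub_self]
    obtain ⟨w, hw⟩ := hxy
    refine ⟨Submodule.Quotient.mk w, ?_⟩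
    rw [btMapL_mk]
    have : (TensorProduct.map f.toAddMonoidHom.toIntLinearMap
        (LinearMap.id : N →ₗ[ℤ] N)) w = x - y := hw
    rw [this]
    have hy0 : (Submodule.Quotient.mk y : BTen R M₂ N) = 0 :=
      (Submodule.Quotient.mk_eq_zero _).mpr hy_mem
    rw [Submodule.Quotient.mk_sub]
    rw [hy0, sub_zero]
  · -- range ≤ ker
    rintro _ ⟨w, rfl⟩
    rw [LinearMap.mem_ker, ← LinearMap.comp_apply, ← btMapL_comp]
    have hcomp : g.comp f = 0 := by
      ext x
      exact hfg.apply_apply_eq_zero x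
    rw [hcomp, btMapL_zero]
    rfl

end BT

/-! ### Projective resolutions with a prescribed bottom epimorphism -/

section Resolution

variable {C : Type*} [Category C] [Abelian C] [EnoughProjectives C]

/-- Auxiliary complex for `resolutionOfEpi`. -/
noncomputable def ofComplex' {Z P : C} [Projective P] (p : P ⟶ Z) : ChainComplex C ℕ :=
  ChainComplex.mk' P (Projective.syzygies p) (Projective.d p)
    (fun f => ⟨_, Projective.d f, by
      show (Projective.π _ ≫ kernel.ι f) ≫ f = 0
      rw [Category.assoc, kernel.condition, comp_zero]⟩)

lemma ofComplex'_d_1_0 {Z P : C} [Projective P] (p : P ⟶ Z) :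
    (ofComplex' p).d 1 0 = Projective.d p := by
  simp [ofComplex']

lemma ofComplex'_exactAt_succ {Z P : C} [Projective P] (p : P ⟶ Z) (n : ℕ) :
    (ofComplex' p).ExactAt (n + 1) := by
  rw [HomologicalComplex.exactAt_iff' _ (n + 1 + 1) (n + 1) n (by simp) (by simp)]
  obtain ⟨e, he⟩ : ∃ e : (ofComplex' p).X (n + 2) ≅ Projective.syzygies ((ofComplex' p).d (n + 1) n),
      (ofComplex' p).d (n + 2) (n + 1) = e.hom ≫ Projective.d ((ofComplex' p).d (n + 1) n) :=
    ⟨_, ChainComplex.mk'_d _ _ _ _ n⟩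
  have hex := CategoryTheory.exact_d_f ((ofComplex' p).d (n + 1) n)
  have hz : Projective.d ((ofComplex' p).d (n + 1) n) ≫ (ofComplex' p).d (n + 1) n = 0 := by
    show (Projective.π _ ≫ kernel.ι _) ≫ _ = 0
    rw [Category.assoc, kernel.condition]
    exact comp_zero
  refine ShortComplex.exact_of_iso
    (ShortComplex.isoMk (S₁ := ShortComplex.mk _ _ hz)
      (S₂ := (ofComplex' p).sc' (n + 2) (n + 1) n) e.symm (Iso.refl _) (Iso.refl _) ?_ ?_) hex
  · change e.inv ≫ (ofComplex' p).d (n + 2) (n + 1) = _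
    rw [he, Iso.inv_hom_id_assoc]
    exact (Category.comp_id _).symm
  · change 𝟙 _ ≫ (ofComplex' p).d (n + 1) n = _
    rw [Category.id_comp]
    exact (Category.comp_id _).symm

instance ofComplex'_projective {Z P : C} [Projective P] (p : P ⟶ Z) (n : ℕ) :
    Projective ((ofComplex' p).X n) := by
  obtain (_ | _ | _ | n) := n
  · exact inferInstanceAs (Projective P)
  · apply Projective.projective_over
  · apply Projective.projective_over
  · apply Projective.projective_over

/-- A projective resolution whose bottom is a prescribed epimorphism from a
projective object. -/
noncomputable def resolutionOfEpi {Z P : C} [Projective P] (p : P ⟶ Z) [Epi p] :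
    ProjectiveResolution Z where
  complex := ofComplex' p
  π := (ChainComplex.toSingle₀Equiv _ _).symm ⟨p, by
        rw [ofComplex'_d_1_0]
        exact (show Projective.d p ≫ p = 0 by
          show (Projective.π _ ≫ kernel.ι p) ≫ p = 0
          rw [Category.assoc, kernel.condition, comp_zero])⟩
  quasiIso := ⟨fun n => by
    cases n with
    | zero =>
      rw [ChainComplex.quasiIsoAt₀_iff, ShortComplex.quasiIso_iff_of_zeros']
      · refine (ShortComplex.exact_and_epi_g_iff_of_iso ?_).2
          ⟨CategoryTheory.exact_d_f p, by dsimp; infer_instance⟩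
        exact ShortComplex.isoMk (Iso.refl _) (Iso.refl _) (Iso.refl _)
          (by erw [Category.id_comp, Category.comp_id]; exact (ofComplex'_d_1_0 p).symm) (by erw [Category.id_comp, Category.comp_id]; exact (ChainComplex.toSingle₀Equiv_symm_apply_f_zero (C := ofComplex' p) (X := Z) p _).symm)
      all_goals rfl
    | succ n =>
      rw [quasiIsoAt_iff_exactAt']
      · apply ofComplex'_exactAt_succ
      · apply ChainComplex.exactAt_succ_single_obj⟩

lemma resolutionOfEpi_π_f_zero {Z P : C} [Projective P] (p : P ⟶ Z) [Epi p] :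
    (resolutionOfEpi p).π.f 0 = p :=
  ChainComplex.toSingle₀Equiv_symm_apply_f_zero _ _

end Resolution

/-! ### Computation of `Tor₁` from a projective presentation -/

lemma torVanish_iff_inj
    (S : Type u) [AddCommGroup S] [Module R S]
    {M : Type u} [AddCommGroup M] [Module Rᵐᵒᵖ M]
    {P₀ : Type u} [AddCommGroup P₀] [Module Rᵐᵒᵖ P₀]
    (hP : Module.Projective Rᵐᵒᵖ P₀)
    (p : P₀ →ₗ[Rᵐᵒᵖ] M) (hp : Function.Surjective p) :
    TorVanish R 1 M S ↔
      Function.Injective (btMapL R S (LinearMap.ker p).subtype) := by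
  haveI : Projective (ModuleCat.of Rᵐᵒᵖ P₀) := (IsProjective.iff_projective P₀).mp hP
  let pc : ModuleCat.of Rᵐᵒᵖ P₀ ⟶ ModuleCat.of Rᵐᵒᵖ M := ModuleCat.ofHom p
  haveI : Epi pc := (ModuleCat.epi_iff_surjective pc).mpr hp
  let P : ProjectiveResolution (ModuleCat.of Rᵐᵒᵖ M) := resolutionOfEpi pc
  let F := tenFunctor R S
  let Cc := (F.mapHomologicalComplex (ComplexShape.down ℕ)).obj P.complex
  let X1 := P.complex.X 1
  let X2 := P.complex.X 2
  let D10 : ↥X1 →ₗ[Rᵐᵒᵖ] P₀ := (P.complex.d 1 0).hom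
  let D21 : ↥X2 →ₗ[Rᵐᵒᵖ] ↥X1 := (P.complex.d 2 1).hom
  -- `p ∘ D10 = 0`
  have h10 : P.complex.d 1 0 ≫ P.π.f 0 = 0 := P.complex_d_comp_π_f_zero
  have hπ : P.π.f 0 = pc := resolutionOfEpi_π_f_zero pc
  rw [hπ] at h10
  have hcomp0 : ∀ y : ↥X1, p (D10 y) = 0 := fun y => by
    have := congrArg (fun φ => φ.hom y) h10
    exact this
  -- `ker p ≤ range D10`
  have hq : QuasiIsoAt P.π 0 := inferInstance
  rw [ChainComplex.quasiIsoAt₀_iff, ShortComplex.quasiIso_iff_of_zeros'] at hq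
  rotate_left
  · exact P.complex.shape 0 0 (by simp)
  · simp; rfl
  · simp; rfl
  obtain ⟨hqex, -⟩ := hq
  rw [ShortComplex.moduleCat_exact_iff] at hqex
  have hker : ∀ x : P₀, p x = 0 → ∃ y : ↥X1, D10 y = x := by
    intro x hx
    refine hqex x ?_
    show (P.π.f 0) x = 0
    rw [hπ]
    exact hx
  -- exactness at degree 1
  have hex1 := P.exact_succ 0
  rw [ShortComplex.moduleCat_exact_iff] at hex1
  have h210 : ∀ y : ↥X2, D10 (D21 y) = 0 := fun y =>
    congrArg (fun φ => φ.hom y) (P.complex.d_comp_d 2 1 0)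
  -- the syzygy module
  set Ω := LinearMap.ker p with hΩdef
  have hmem : ∀ y : ↥X1, D10 y ∈ Ω := fun y => LinearMap.mem_ker.mpr (hcomp0 y)
  let ρ : ↥X1 →ₗ[Rᵐᵒᵖ] ↥Ω := LinearMap.codRestrict Ω D10 hmem
  have hρsurj : Function.Surjective ρ := by
    rintro ⟨x, hx⟩
    obtain ⟨y, hy⟩ := hker x hx
    exact ⟨y, Subtype.ext hy⟩
  have hρexact : Function.Exact D21 ρ := by
    intro y
    constructor
    · intro h0
      have : D10 y = 0 := congrArg Subtype.val h0
      obtain ⟨z, hz⟩ := hex1 y this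
      exact ⟨z, hz⟩
    · rintro ⟨z, rfl⟩
      exact Subtype.ext (h210 z)
  have hfact : Ω.subtype.comp ρ = D10 := rfl
  -- tensored versions
  have hbtρ := btMapL_surjective R S ρ hρsurj
  have hbtex := btMapL_exact R S D21 ρ hρexact hρsurj
  have hbtfact := btMapL_comp R S ρ Ω.subtype
  rw [hfact] at hbtfact
  -- vanishing of the derived functor ↔ exactness of the tensored complex at 1
  have hvan : TorVanish R 1 M S ↔ Cc.ExactAt 1 := by
    constructor
    · intro h
      rw [HomologicalComplex.exactAt_iff_isZero_homology]
      exact Limits.IsZero.of_iso h (P.isoLeftDerivedObj F 1).symm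
    · intro h
      exact Limits.IsZero.of_iso
        ((HomologicalComplex.exactAt_iff_isZero_homology _ _).mp h)
        (P.isoLeftDerivedObj F 1)
  have hsc : Cc.ExactAt 1 ↔ (Cc.sc' 2 1 0).Exact :=
    Cc.exactAt_iff' 2 1 0 (by simp) (by simp)
  rw [hvan, hsc, ShortComplex.moduleCat_exact_iff]
  have hρD : ρ.comp D21 = (0 : ↥X2 →ₗ[Rᵐᵒᵖ] ↥Ω) := by
    ext z
    simpa using hρexact.apply_apply_eq_zero z
  constructor
  · intro h
    have h' : ∀ x : BTen R ↥X1 S, btMapL R S D10 x = 0 →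
        ∃ w : BTen R ↥X2 S, btMapL R S D21 w = x := h
    rw [injective_iff_map_eq_zero]
    intro u hu
    obtain ⟨x, rfl⟩ := hbtρ u
    have hx0 : btMapL R S D10 x = 0 := by
      rw [hbtfact]
      exact hu
    obtain ⟨w, hw⟩ := h' x hx0
    rw [← hw, ← LinearMap.comp_apply, ← btMapL_comp, hρD, btMapL_zero]
    rfl
  · intro hinj x2 hx2
    have hx2' : btMapL R S D10 x2 = 0 := hx2
    have hz : btMapL R S ρ x2 = 0 := by
      apply (injective_iff_map_eq_zero _).mp hinj
      rw [hbtfact] at hx2'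
      exact hx2'
    obtain ⟨w, hw⟩ := (hbtex x2).mp hz
    exact ⟨w, hw⟩

/-! ### The diagram chase -/

lemma chase (S : Type u) [AddCommGroup S] [Module R S]
    {T : Type u} [AddCommGroup T] [Module Rᵐᵒᵖ T] (K : Submodule Rᵐᵒᵖ T)
    (hKinj : Function.Injective (btMapL R S K.subtype))
    {P₀ : Type u} [AddCommGroup P₀] [Module Rᵐᵒᵖ P₀]
    (p : P₀ →ₗ[Rᵐᵒᵖ] T) (hp : Function.Surjective p)
    (hiT : Function.Injective (btMapL R S (LinearMap.ker p).subtype)) :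
    Function.Injective (btMapL R S (LinearMap.ker (K.mkQ.comp p)).subtype) := by
  set ΩT := LinearMap.ker p with hOT
  set ΩQ := LinearMap.ker (K.mkQ.comp p) with hOQ
  have hle : ΩT ≤ ΩQ := fun x hx => by
    have hx' : p x = 0 := hx
    show K.mkQ (p x) = 0
    rw [hx', map_zero]
  have hmemK : ∀ x : ↥ΩQ, p x.1 ∈ K := fun x => by
    have hx : K.mkQ (p x.1) = 0 := x.2
    exact (Submodule.Quotient.mk_eq_zero K).mp hx
  let j : ↥ΩQ →ₗ[Rᵐᵒᵖ] ↥K := LinearMap.codRestrict K (p.comp ΩQ.subtype)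
    (fun x => hmemK x)
  let inc : ↥ΩT →ₗ[Rᵐᵒᵖ] ↥ΩQ := Submodule.inclusion hle
  have hjsurj : Function.Surjective j := by
    rintro ⟨k, hk⟩
    obtain ⟨y, hy⟩ := hp k
    have hyQ : y ∈ ΩQ := by
      show K.mkQ (p y) = 0
      rw [hy]
      exact (Submodule.Quotient.mk_eq_zero K).mpr hk
    exact ⟨⟨y, hyQ⟩, Subtype.ext hy⟩
  have hexact : Function.Exact inc j := by
    intro x
    constructor
    · intro h0
      have hx : p x.1 = 0 := congrArg Subtype.val h0
      exact ⟨⟨x.1, hx⟩, rfl⟩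
    · rintro ⟨z, rfl⟩
      exact Subtype.ext z.2
  have hcomp1 : K.subtype.comp j = p.comp ΩQ.subtype := rfl
  have hcomp2 : ΩQ.subtype.comp inc = ΩT.subtype := rfl
  rw [injective_iff_map_eq_zero]
  intro u hu
  have h1 : btMapL R S K.subtype (btMapL R S j u) = 0 := by
    rw [← LinearMap.comp_apply, ← btMapL_comp, hcomp1,
      btMapL_comp, LinearMap.comp_apply, hu, map_zero]
  have h2 : btMapL R S j u = 0 :=
    (injective_iff_map_eq_zero _).mp hKinj _ h1
  obtain ⟨y, rfl⟩ := (btMapL_exact R S inc j hexact hjsurj u).mp h2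
  have h3 : btMapL R S ΩT.subtype y = 0 := by
    rw [← hcomp2, btMapL_comp, LinearMap.comp_apply, hu]
  have h4 : y = 0 := (injective_iff_map_eq_zero _).mp hiT _ h3
  rw [h4, map_zero]

end Stmt2Aux

end Stmt2Aux

set_option maxHeartbeats 1000000 in
/-- Let `(𝒯, 𝒮)` be a hereditary Tor-pair. If `T ∈ 𝒯` and `K` is an
`𝒮`-pure submodule of `T`, then `K ∈ 𝒯`. -/
theorem stmt2 (R : Type u) [Ring R] (𝒯 : ModClass Rᵐᵒᵖ) (𝒮 : ModClass R)
    (htor : IsTorPair R 𝒯 𝒮) (hher : Resolving 𝒯)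
    (T : Type u) [AddCommGroup T] [Module Rᵐᵒᵖ T] (hT : 𝒯 T)
    (K : Submodule Rᵐᵒᵖ T) (hK : SPureSubmodule R 𝒮 T K) : 𝒯 K := by
  classical
  have hP : Module.Projective Rᵐᵒᵖ (T →₀ Rᵐᵒᵖ) := inferInstance
  have hp : Function.Surjective (Finsupp.linearCombination (M := T) Rᵐᵒᵖ id) :=
    fun t => ⟨Finsupp.single t 1, by simp⟩
  have hq : Function.Surjective
      (K.mkQ.comp (Finsupp.linearCombination (M := T) Rᵐᵒᵖ id)) :=
    (Submodule.mkQ_surjective K).comp hp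
  have hTQ : 𝒯 (T ⧸ K) := by
    refine (htor.1 (T ⧸ K)).mpr ?_
    intro S _ _ hS
    rw [Stmt2Aux.torVanish_iff_inj R S hP _ hq]
    refine Stmt2Aux.chase R S K (hK S hS).1 _ hp ?_
    exact (Stmt2Aux.torVanish_iff_inj R S hP _ hp).mp (((htor.1 T).mp hT) S hS)
  have hker := hher.2.2 T (T ⧸ K) K.mkQ (Submodule.mkQ_surjective K) hT hTQ
  rwa [Submodule.ker_mkQ] at hker
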